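/- Let (φ_{s,t}) be an evolution family in ℍ with common Denjoy–Wolff point ∞. The following are equivalent: (a) there exist s₀ ≥ 0 and w₀ ∈ ℍ such that sup{ Re φ_{s₀,t}(w₀) : t ≥ s₀ } < +∞; (b) for every s ≥ 0 and every w ∈ ℍ, sup{ Re φ_{s,t}(w) : t ≥ s } < +∞; (c) for every s ≥ 0 there exists a holomorphic map θ_s : ℍ → ℍ such that φ_{s,t} − i·Im φ_{s,t}(1) → θ_s uniformly on compact subsets of ℍ as t → +∞. -/

import Mathlib

open Complex MeasureTheory Set Filter Topology

/-- The right half-plane `ℍ = {w : Re w > 0}`. -/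
def RHP : Set ℂ := {w : ℂ | 0 < w.re}

/-- An evolution family in the right half-plane with common Denjoy-Wolff point `∞`,
together with its associated (Herglotz) vector field `F`. -/
structure EvolutionFamilyRHP where
  φ : ℝ → ℝ → ℂ → ℂ
  F : ℂ → ℝ → ℂ
  mapsTo : ∀ ⦃s t : ℝ⦄, 0 ≤ s → s ≤ t → Set.MapsTo (φ s t) RHP RHP
  holo : ∀ ⦃s t : ℝ⦄, 0 ≤ s → s ≤ t → DifferentiableOn ℂ (φ s t) RHP
  id_eq : ∀ ⦃s : ℝ⦄, 0 ≤ s → ∀ w ∈ RHP, φ s s w = w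
  comp : ∀ ⦃s u t : ℝ⦄, 0 ≤ s → s ≤ u → u ≤ t → ∀ w ∈ RHP,
    φ s t w = φ u t (φ s u w)
  F_meas : ∀ w ∈ RHP, Measurable (F w)
  F_holo : ∀ t : ℝ, 0 ≤ t → DifferentiableOn ℂ (fun w => F w t) RHP
  F_re_nonneg : ∀ w ∈ RHP, ∀ t : ℝ, 0 ≤ t → 0 ≤ (F w t).re
  F_bound : ∀ K : Set ℂ, K ⊆ RHP → IsCompact K → ∀ T : ℝ, 0 < T →
    ∃ k : ℝ → ℝ, (∀ t, 0 ≤ k t) ∧ MeasureTheory.IntegrableOn k (Set.Icc 0 T) ∧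
      ∀ w ∈ K, ∀ᵐ t ∂(MeasureTheory.volume.restrict (Set.Icc (0:ℝ) T)),
        ‖F w t‖ ≤ k t
  integral_eq : ∀ ⦃s t : ℝ⦄, 0 ≤ s → s ≤ t → ∀ w ∈ RHP,
    φ s t w = w + ∫ ξ in s..t, F (φ s ξ w) ξ

lemma isOpen_RHP : IsOpen RHP := isOpen_lt continuous_const Complex.continuous_re

lemma one_mem_RHP : (1 : ℂ) ∈ RHP := by simp [RHP]

lemma sq_identity (z w : ℂ) :
    ‖z + starRingEnd ℂ w‖ ^ 2 - ‖z - w‖ ^ 2 = 4 * z.re * w.re := by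
  rw [Complex.sq_norm, Complex.sq_norm]
  simp [Complex.normSq_apply]
  ring

lemma abs_sub_lt_abs_add_conj {z w : ℂ} (hz : z ∈ RHP) (hw : w ∈ RHP) :
    ‖z - w‖ < ‖z + starRingEnd ℂ w‖ := by
  have h := sq_identity z w
  have h4 : 0 < 4 * z.re * w.re := by
    have := hz.out; have := hw.out; positivity
  have hsq : ‖z - w‖ ^ 2 < ‖z + starRingEnd ℂ w‖ ^ 2 := by linarith
  exact lt_of_pow_lt_pow_left₀ 2 (norm_nonneg _) hsq

lemma abs_add_conj_pos {z w : ℂ} (hz : z ∈ RHP) (hw : w ∈ RHP) :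
    0 < ‖z + starRingEnd ℂ w‖ :=
  lt_of_le_of_lt (norm_nonneg _) (abs_sub_lt_abs_add_conj hz hw)

/-- Schwarz–Pick inequality for holomorphic self-maps of the right half-plane,
in cross-multiplied (pseudo-hyperbolic distance) form. -/
lemma schwarz_pick_RHP {f : ℂ → ℂ} (hf : DifferentiableOn ℂ f RHP) (hm : MapsTo f RHP RHP)
    {z z₀ : ℂ} (hz : z ∈ RHP) (hz₀ : z₀ ∈ RHP) :
    ‖f z - f z₀‖ * ‖z + starRingEnd ℂ z₀‖ ≤
      ‖z - z₀‖ * ‖f z + starRingEnd ℂ (f z₀)‖ := by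
  set v₀ := f z₀ with hv₀
  have hv₀m : v₀ ∈ RHP := hm hz₀
  -- the Cayley-type map from the disc to RHP sending 0 to z₀
  set S : ℂ → ℂ := fun u => (z₀ + u * starRingEnd ℂ z₀) / (1 - u) with hS
  have hSmaps : MapsTo S (Metric.ball (0:ℂ) 1) RHP := by
    intro u hu
    simp only [Metric.mem_ball, dist_zero_right] at hu
    have h1u : (1 : ℂ) - u ≠ 0 := by
      intro h
      have : u = 1 := by linear_combination -h
      rw [this] at hu; simp at hu
    have hns : 0 < Complex.normSq (1 - u) := Complex.normSq_pos.2 h1u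
    have hre : (S u).re = (1 - Complex.normSq u) * z₀.re / Complex.normSq (1 - u) := by
      rw [hS]
      simp only [Complex.div_re]
      simp [Complex.normSq_apply]
      field_simp
      ring
    have hu2 : Complex.normSq u < 1 := by
      have := Complex.sq_norm u
      nlinarith [norm_nonneg u]
    show 0 < (S u).re
    rw [hre]
    have hz₀' := hz₀.out
    have h1 : 0 < 1 - Complex.normSq u := by linarith
    exact div_pos (mul_pos h1 hz₀') hns
  -- the map from RHP to the disc sending v₀ to 0, composed
  set g : ℂ → ℂ := fun u => (f (S u) - v₀) / (f (S u) + starRingEnd ℂ v₀) with hg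
  have hgden : ∀ u ∈ Metric.ball (0:ℂ) 1, f (S u) + starRingEnd ℂ v₀ ≠ 0 := by
    intro u hu
    have := abs_add_conj_pos (hm (hSmaps hu)) hv₀m
    intro h; rw [h] at this; simp at this
  have hgd : DifferentiableOn ℂ g (Metric.ball (0:ℂ) 1) := by
    have hSd : DifferentiableOn ℂ S (Metric.ball (0:ℂ) 1) := by
      apply DifferentiableOn.div
      · exact (differentiableOn_const _).add
          (differentiableOn_id.mul (differentiableOn_const _))
      · exact (differentiableOn_const _).sub differentiableOn_id
      · intro u hu
        simp only [Metric.mem_ball, dist_zero_right] at hu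
        intro h
        have : u = 1 := by linear_combination -h
        rw [this] at hu; simp at hu
    have hfS : DifferentiableOn ℂ (fun u => f (S u)) (Metric.ball (0:ℂ) 1) :=
      hf.comp hSd hSmaps
    exact (hfS.sub (differentiableOn_const _)).div
      (hfS.add (differentiableOn_const _)) hgden
  have hgmaps : MapsTo g (Metric.ball (0:ℂ) 1) (Metric.ball (0:ℂ) 1) := by
    intro u hu
    simp only [Metric.mem_ball, dist_zero_right, hg, norm_div]
    rw [div_lt_one (abs_add_conj_pos (hm (hSmaps hu)) hv₀m)]
    exact abs_sub_lt_abs_add_conj (hm (hSmaps hu)) hv₀m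
  have hS0 : S 0 = z₀ := by simp [hS]
  have hg0 : g 0 = 0 := by simp [hg, hS0, hv₀]
  -- the point where we apply the Schwarz lemma
  set u : ℂ := (z - z₀) / (z + starRingEnd ℂ z₀) with hu
  have hden : z + starRingEnd ℂ z₀ ≠ 0 := by
    have := abs_add_conj_pos hz hz₀
    intro h; rw [h] at this; simp at this
  have huball : ‖u‖ < 1 := by
    rw [hu, norm_div, div_lt_one (abs_add_conj_pos hz hz₀)]
    exact abs_sub_lt_abs_add_conj hz hz₀
  have hconjsum : z₀ + starRingEnd ℂ z₀ ≠ 0 := by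
    rw [Complex.add_conj]
    exact_mod_cast Complex.ofReal_ne_zero.2 (by have := hz₀.out; positivity)
  have h1u : (1 : ℂ) - u ≠ 0 := by
    intro h
    have hu1 : u = 1 := by linear_combination -h
    rw [hu1] at huball; simp at huball
  have hSu : S u = z := by
    rw [hS]
    simp only
    rw [div_eq_iff h1u, hu]
    field_simp
    ring
  have := Complex.norm_le_norm_of_mapsTo_ball hgd (hgmaps.mono_right Metric.ball_subset_closedBall) hg0 huball
  rw [hg] at this
  simp only [hSu] at this
  rw [hu, norm_div, norm_div, div_le_div_iff₀ (abs_add_conj_pos (hm hz) hv₀m)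
    (abs_add_conj_pos hz hz₀)] at this
  linarith

/-- Quantitative Schwarz–Pick estimate for holomorphic maps of `RHP` into the closed
right half-plane. -/
lemma sp_bound {f : ℂ → ℂ} (hf : DifferentiableOn ℂ f RHP) (hm : ∀ z ∈ RHP, 0 ≤ (f z).re)
    {z z₀ : ℂ} (hz : z ∈ RHP) (hz₀ : z₀ ∈ RHP) {ρ : ℝ} (hρ0 : 0 ≤ ρ) (hρ1 : ρ < 1)
    (hρ : ‖z - z₀‖ ≤ ρ * ‖z + starRingEnd ℂ z₀‖) :
    ‖f z - f z₀‖ ≤ 2 * ρ / (1 - ρ) * (f z₀).re := by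
  have key : ∀ δ : ℝ, 0 < δ →
      ‖f z - f z₀‖ ≤ ρ * (‖f z - f z₀‖ + 2 * (f z₀).re + 2 * δ) := by
    intro δ hδ
    set fδ : ℂ → ℂ := fun w => f w + (δ : ℂ) with hfδ
    have hfδd : DifferentiableOn ℂ fδ RHP := hf.add (differentiableOn_const _)
    have hfδm : MapsTo fδ RHP RHP := by
      intro w hw
      show 0 < (f w + (δ:ℂ)).re
      rw [Complex.add_re, Complex.ofReal_re]
      have := hm w hw
      linarith
    have hsp := schwarz_pick_RHP hfδd hfδm hz hz₀
    have e1 : fδ z - fδ z₀ = f z - f z₀ := by rw [hfδ]; ring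
    have e2 : fδ z + starRingEnd ℂ (fδ z₀) = (f z - f z₀) + ((2 * (f z₀).re + 2 * δ : ℝ) : ℂ) := by
      rw [hfδ]
      simp only [map_add, Complex.conj_ofReal]
      have h := Complex.add_conj (f z₀)
      push_cast at h ⊢
      linear_combination h
    rw [e1, e2] at hsp
    have hB : 0 < ‖z + starRingEnd ℂ z₀‖ := abs_add_conj_pos hz hz₀
    have htri : ‖(f z - f z₀) + ((2 * (f z₀).re + 2 * δ : ℝ) : ℂ)‖ ≤
        ‖f z - f z₀‖ + (2 * (f z₀).re + 2 * δ) := by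
      refine (norm_add_le _ _).trans ?_
      rw [Complex.norm_real, Real.norm_eq_abs]
      have : |2 * (f z₀).re + 2 * δ| = 2 * (f z₀).re + 2 * δ := by
        rw [_root_.abs_of_nonneg]; have := hm z₀ hz₀; linarith
      linarith
    have h2 : ‖f z - f z₀‖ * ‖z + starRingEnd ℂ z₀‖ ≤
        ρ * ‖z + starRingEnd ℂ z₀‖ *
          (‖f z - f z₀‖ + (2 * (f z₀).re + 2 * δ)) := by
      calc ‖f z - f z₀‖ * ‖z + starRingEnd ℂ z₀‖
          ≤ ‖z - z₀‖ *
              ‖(f z - f z₀) + ((2 * (f z₀).re + 2 * δ : ℝ) : ℂ)‖ := hsp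
        _ ≤ (ρ * ‖z + starRingEnd ℂ z₀‖) *
              (‖f z - f z₀‖ + (2 * (f z₀).re + 2 * δ)) := by
            apply mul_le_mul hρ htri (norm_nonneg _)
            positivity
    have h3 := (mul_le_mul_iff_of_pos_right hB).1 (by linarith [h2] :
      ‖f z - f z₀‖ * ‖z + starRingEnd ℂ z₀‖ ≤
        (ρ * (‖f z - f z₀‖ + 2 * (f z₀).re + 2 * δ)) *
          ‖z + starRingEnd ℂ z₀‖)
    linarith
  have key2 : ‖f z - f z₀‖ ≤ ρ * (‖f z - f z₀‖ + 2 * (f z₀).re) := by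
    refine le_of_forall_pos_le_add fun ε hε => ?_
    rcases eq_or_lt_of_le hρ0 with h0 | h0
    · have := key 1 one_pos
      rw [← h0] at this ⊢
      simpa using this.trans (by linarith)
    · have := key (ε / (2 * ρ)) (by positivity)
      have : ρ * (ε / (2 * ρ)) = ε / 2 := by field_simp
      nlinarith [key (ε / (2 * ρ)) (by positivity)]
  have h1ρ : 0 < 1 - ρ := by linarith
  rw [div_mul_eq_mul_div, le_div_iff₀ h1ρ]
  nlinarith [key2]

lemma re_le_phi_re (E : EvolutionFamilyRHP) {s t : ℝ} (hs : 0 ≤ s) (hst : s ≤ t)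
    {w : ℂ} (hw : w ∈ RHP) : w.re ≤ (E.φ s t w).re := by
  rw [E.integral_eq hs hst w hw, Complex.add_re]
  suffices h : 0 ≤ (∫ ξ in s..t, E.F (E.φ s ξ w) ξ).re by linarith
  by_cases hInt : IntervalIntegrable (fun ξ => E.F (E.φ s ξ w) ξ) volume s t
  · have := (Complex.reCLM : ℂ →L[ℝ] ℝ).intervalIntegral_comp_comm hInt
    simp only [Complex.reCLM_apply] at this
    rw [← this]
    apply intervalIntegral.integral_nonneg hst
    intro u hu
    exact E.F_re_nonneg _ (E.mapsTo hs hu.1 hw) u (hs.trans hu.1)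
  · rw [intervalIntegral.integral_undef hInt]
    simp

lemma phi_re_mono (E : EvolutionFamilyRHP) {s t t' : ℝ} (hs : 0 ≤ s) (hst : s ≤ t)
    (htt' : t ≤ t') {w : ℂ} (hw : w ∈ RHP) : (E.φ s t w).re ≤ (E.φ s t' w).re := by
  rw [E.comp hs hst htt' w hw]
  exact re_le_phi_re E (hs.trans hst) htt' (E.mapsTo hs hst hw)

/-- The key uniform Cauchy estimate for the normalized maps. -/
lemma cauchy_est (E : EvolutionFamilyRHP) {s t t' : ℝ} (hs : 0 ≤ s) (hst : s ≤ t) (htt' : t ≤ t')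
    {w : ℂ} (hw : w ∈ RHP) {ρ : ℝ} (hρ0 : 0 ≤ ρ) (hρ1 : ρ < 1)
    (hρ : ‖w - 1‖ ≤ ρ * ‖w + 1‖) :
    ‖(E.φ s t' w - ((E.φ s t' 1).im : ℂ) * Complex.I) -
        (E.φ s t w - ((E.φ s t 1).im : ℂ) * Complex.I)‖ ≤
      (2 * ρ / (1 - ρ) + 1) * ((E.φ s t' 1).re - (E.φ s t 1).re) := by
  have ht0 : 0 ≤ t := hs.trans hst
  set z : ℂ := E.φ s t w with hz
  set z₁ : ℂ := E.φ s t 1 with hz₁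
  have hzm : z ∈ RHP := E.mapsTo hs hst hw
  have hz₁m : z₁ ∈ RHP := E.mapsTo hs hst one_mem_RHP
  set h : ℂ → ℂ := fun x => E.φ t t' x - x with hh
  have hhd : DifferentiableOn ℂ h RHP := (E.holo ht0 htt').sub differentiableOn_id
  have hhre : ∀ x ∈ RHP, 0 ≤ (h x).re := by
    intro x hx
    have := re_le_phi_re E ht0 htt' hx
    simp only [hh, Complex.sub_re]
    linarith
  -- pseudo-hyperbolic contraction for φ s t
  have hcontr : ‖z - z₁‖ ≤ ρ * ‖z + starRingEnd ℂ z₁‖ := by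
    have hsp := schwarz_pick_RHP (E.holo hs hst) (E.mapsTo hs hst) hw one_mem_RHP
    have hc1 : starRingEnd ℂ (1 : ℂ) = 1 := by simp
    rw [hc1] at hsp
    have hB : 0 < ‖w + 1‖ := by
      have := abs_add_conj_pos hw one_mem_RHP
      rwa [hc1] at this
    have : ‖z - z₁‖ * ‖w + 1‖ ≤
        (ρ * ‖z + starRingEnd ℂ z₁‖) * ‖w + 1‖ := by
      calc ‖z - z₁‖ * ‖w + 1‖
          ≤ ‖w - 1‖ * ‖z + starRingEnd ℂ z₁‖ := hsp
        _ ≤ (ρ * ‖w + 1‖) * ‖z + starRingEnd ℂ z₁‖ :=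
            mul_le_mul_of_nonneg_right hρ (norm_nonneg _)
        _ = (ρ * ‖z + starRingEnd ℂ z₁‖) * ‖w + 1‖ := by ring
    exact le_of_mul_le_mul_right this hB
  have hspb := sp_bound hhd hhre hzm hz₁m hρ0 hρ1 hcontr
  -- rewrite the difference
  have hcomp : E.φ s t' w = E.φ t t' z := E.comp hs hst htt' w hw
  have hcomp1 : E.φ s t' 1 = E.φ t t' z₁ := E.comp hs hst htt' 1 one_mem_RHP
  have hdiff : (E.φ s t' w - ((E.φ s t' 1).im : ℂ) * Complex.I) -
      (E.φ s t w - ((E.φ s t 1).im : ℂ) * Complex.I) =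
      (h z - h z₁) + (((h z₁).re : ℝ) : ℂ) := by
    rw [hcomp, hcomp1, hh]
    simp only
    rw [Complex.ext_iff]
    constructor
    · simp [Complex.sub_re, Complex.add_re, Complex.mul_re, hz, hz₁]
    · simp only [Complex.sub_im, Complex.add_im, Complex.mul_im, Complex.ofReal_re,
        Complex.ofReal_im, Complex.I_re, Complex.I_im, mul_zero, mul_one, zero_mul, zero_sub,
        zero_add, sub_zero]
      rw [hz, hz₁]
      ring
  have hre1 : (h z₁).re = (E.φ s t' 1).re - (E.φ s t 1).re := by
    rw [hh]; simp only [Complex.sub_re]; rw [hcomp1]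
  rw [hdiff]
  calc ‖(h z - h z₁) + (((h z₁).re : ℝ) : ℂ)‖
      ≤ ‖h z - h z₁‖ + ‖(((h z₁).re : ℝ) : ℂ)‖ := norm_add_le _ _
    _ ≤ 2 * ρ / (1 - ρ) * (h z₁).re + (h z₁).re := by
        rw [Complex.norm_real, Real.norm_eq_abs, _root_.abs_of_nonneg (hhre z₁ hz₁m)]
        linarith [hspb]
    _ = (2 * ρ / (1 - ρ) + 1) * (h z₁).re := by ring
    _ = (2 * ρ / (1 - ρ) + 1) * ((E.φ s t' 1).re - (E.φ s t 1).re) := by rw [hre1]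

lemma exists_rho {K : Set ℂ} (hK : K ⊆ RHP) (hc : IsCompact K) (hne : K.Nonempty) :
    ∃ ρ : ℝ, 0 ≤ ρ ∧ ρ < 1 ∧ ∀ w ∈ K, ‖w - 1‖ ≤ ρ * ‖w + 1‖ := by
  set q : ℂ → ℝ := fun w => ‖w - 1‖ / ‖w + 1‖ with hq
  have hden : ∀ w ∈ K, 0 < ‖w + 1‖ := by
    intro w hw
    have := abs_add_conj_pos (hK hw) one_mem_RHP
    simpa using this
  have hqc : ContinuousOn q K := by
    apply ContinuousOn.div
    · exact (continuous_norm.comp (continuous_id.sub continuous_const)).continuousOn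
    · exact (continuous_norm.comp (continuous_id.add continuous_const)).continuousOn
    · exact fun w hw => (hden w hw).ne'
  obtain ⟨w₁, hw₁, hmax⟩ := hc.exists_isMaxOn hne hqc
  refine ⟨q w₁, by positivity, ?_, ?_⟩
  · rw [hq]
    simp only
    rw [div_lt_one (hden w₁ hw₁)]
    have := abs_sub_lt_abs_add_conj (hK hw₁) one_mem_RHP
    simpa using this
  · intro w hw
    have h1 : ‖w - 1‖ = q w * ‖w + 1‖ := by
      rw [hq]; simp only; rw [div_mul_cancel₀ _ (hden w hw).ne']
    rw [h1]
    exact mul_le_mul_of_nonneg_right (hmax hw) (norm_nonneg _)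

lemma a_to_b (E : EvolutionFamilyRHP) {s₀ : ℝ} (hs₀ : 0 ≤ s₀) {w₀ : ℂ} (hw₀ : w₀ ∈ RHP)
    {M : ℝ} (hM : ∀ t : ℝ, s₀ ≤ t → (E.φ s₀ t w₀).re ≤ M) :
    ∀ s : ℝ, 0 ≤ s → ∀ w ∈ RHP, ∃ M' : ℝ, ∀ t : ℝ, s ≤ t → (E.φ s t w).re ≤ M' := by
  intro s hs w hw
  set t₀ : ℝ := max s s₀ with ht₀
  have ht₀0 : 0 ≤ t₀ := le_trans hs (le_max_left _ _)
  have hst₀ : s ≤ t₀ := le_max_left _ _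
  have hs₀t₀ : s₀ ≤ t₀ := le_max_right _ _
  set z : ℂ := E.φ s t₀ w with hz
  set z₀ : ℂ := E.φ s₀ t₀ w₀ with hz₀
  have hzm : z ∈ RHP := E.mapsTo hs hst₀ hw
  have hz₀m : z₀ ∈ RHP := E.mapsTo hs₀ hs₀t₀ hw₀
  have hB : 0 < ‖z + starRingEnd ℂ z₀‖ := abs_add_conj_pos hzm hz₀m
  set ρ : ℝ := ‖z - z₀‖ / ‖z + starRingEnd ℂ z₀‖ with hρdef
  have hρ0 : 0 ≤ ρ := by positivity
  have hρ1 : ρ < 1 := by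
    rw [hρdef, div_lt_one hB]
    exact abs_sub_lt_abs_add_conj hzm hz₀m
  have hρeq : ‖z - z₀‖ ≤ ρ * ‖z + starRingEnd ℂ z₀‖ := by
    rw [hρdef, div_mul_cancel₀ _ hB.ne']
  have hM0 : 0 < M := lt_of_lt_of_le (E.mapsTo hs₀ hs₀t₀ hw₀).out (hM t₀ hs₀t₀)
  refine ⟨(1 + 2 * ρ / (1 - ρ)) * M, fun t ht => ?_⟩
  set u : ℝ := max t t₀ with hu
  have htu : t ≤ u := le_max_left _ _
  have ht₀u : t₀ ≤ u := le_max_right _ _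
  have h1 : (E.φ s t w).re ≤ (E.φ s u w).re := phi_re_mono E hs ht htu hw
  have h2 : E.φ s u w = E.φ t₀ u z := E.comp hs hst₀ ht₀u w hw
  have h3 : E.φ s₀ u w₀ = E.φ t₀ u z₀ := E.comp hs₀ hs₀t₀ ht₀u w₀ hw₀
  have hre0 : ∀ x ∈ RHP, 0 ≤ (E.φ t₀ u x).re := fun x hx => (E.mapsTo ht₀0 ht₀u hx).out.le
  have hsp := sp_bound (E.holo ht₀0 ht₀u) hre0 hzm hz₀m hρ0 hρ1 hρeq
  have hreab : (E.φ t₀ u z).re - (E.φ t₀ u z₀).re ≤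
      ‖E.φ t₀ u z - E.φ t₀ u z₀‖ := by
    have := Complex.re_le_norm (E.φ t₀ u z - E.φ t₀ u z₀)
    rwa [Complex.sub_re] at this
  have hz₀le : (E.φ t₀ u z₀).re ≤ M := by rw [← h3]; exact hM u (hs₀t₀.trans ht₀u)
  have hcoef : 0 ≤ 2 * ρ / (1 - ρ) := by
    have : 0 < 1 - ρ := by linarith
    positivity
  calc (E.φ s t w).re ≤ (E.φ t₀ u z).re := by rw [← h2]; exact h1
    _ ≤ (E.φ t₀ u z₀).re + ‖E.φ t₀ u z - E.φ t₀ u z₀‖ := by linarith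
    _ ≤ M + 2 * ρ / (1 - ρ) * M := by
        have h4 : 2 * ρ / (1 - ρ) * (E.φ t₀ u z₀).re ≤ 2 * ρ / (1 - ρ) * M :=
          mul_le_mul_of_nonneg_left hz₀le hcoef
        linarith
    _ = (1 + 2 * ρ / (1 - ρ)) * M := by ring

lemma b_to_c (E : EvolutionFamilyRHP) (hb : ∀ s : ℝ, 0 ≤ s → ∀ w ∈ RHP, ∃ M : ℝ,
    ∀ t : ℝ, s ≤ t → (E.φ s t w).re ≤ M) {s : ℝ} (hs : 0 ≤ s) :
    ∃ θ : ℂ → ℂ, DifferentiableOn ℂ θ RHP ∧ Set.MapsTo θ RHP RHP ∧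
      ∀ K : Set ℂ, K ⊆ RHP → IsCompact K →
        TendstoUniformlyOn
          (fun t w => E.φ s t w - ((E.φ s t 1).im : ℂ) * Complex.I) θ atTop K := by
  set Ψ : ℝ → ℂ → ℂ := fun t w => E.φ s t w - ((E.φ s t 1).im : ℂ) * Complex.I with hΨ
  obtain ⟨M, hM⟩ := hb s hs 1 one_mem_RHP
  set r : ℝ → ℝ := fun t => (E.φ s (max s t) 1).re with hr
  have hrmono : Monotone r := fun t t' htt' =>
    phi_re_mono E hs (le_max_left _ _) (max_le_max le_rfl htt') one_mem_RHP
  have hrbdd : BddAbove (Set.range r) := by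
    refine ⟨M, ?_⟩
    rintro x ⟨t, rfl⟩
    exact hM _ (le_max_left _ _)
  set L : ℝ := ⨆ t, r t with hL
  have hrL : Tendsto r atTop (𝓝 L) := tendsto_atTop_ciSup hrmono hrbdd
  have hrle : ∀ t, r t ≤ L := fun t => le_ciSup hrbdd t
  have hreq : ∀ t : ℝ, s ≤ t → r t = (E.φ s t 1).re := by
    intro t ht; rw [hr]; simp only; rw [max_eq_right ht]
  -- the main uniform estimate
  have key : ∀ ρ : ℝ, 0 ≤ ρ → ρ < 1 → ∀ w ∈ RHP,
      ‖w - 1‖ ≤ ρ * ‖w + 1‖ →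
      ∀ t t' : ℝ, s ≤ t → t ≤ t' →
      dist (Ψ t' w) (Ψ t w) ≤ (2 * ρ / (1 - ρ) + 1) * (L - r t) := by
    intro ρ hρ0 hρ1 w hw hρ t t' hst htt'
    have hC0 : 0 ≤ 2 * ρ / (1 - ρ) + 1 := by
      have : 0 < 1 - ρ := by linarith
      positivity
    rw [Complex.dist_eq]
    calc ‖Ψ t' w - Ψ t w‖
        ≤ (2 * ρ / (1 - ρ) + 1) * ((E.φ s t' 1).re - (E.φ s t 1).re) :=
          cauchy_est E hs hst htt' hw hρ0 hρ1 hρ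
      _ = (2 * ρ / (1 - ρ) + 1) * (r t' - r t) := by
          rw [hreq t hst, hreq t' (hst.trans htt')]
      _ ≤ (2 * ρ / (1 - ρ) + 1) * (L - r t) := by
          have := hrle t'
          apply mul_le_mul_of_nonneg_left _ hC0
          linarith
  -- pointwise convergence along a sequence
  have hrseq : Tendsto (fun n : ℕ => r (s + n)) atTop (𝓝 L) :=
    hrL.comp (tendsto_atTop_add_const_left atTop s tendsto_natCast_atTop_atTop)
  have hpt : ∀ w ∈ RHP, ∃ l, Tendsto (fun n : ℕ => Ψ (s + n) w) atTop (𝓝 l) := by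
    intro w hw
    obtain ⟨ρ, hρ0, hρ1, hρ⟩ := exists_rho (singleton_subset_iff.2 hw)
      isCompact_singleton ⟨w, rfl⟩
    have hC0 : 0 ≤ 2 * ρ / (1 - ρ) + 1 := by
      have : 0 < 1 - ρ := by linarith
      positivity
    apply cauchySeq_tendsto_of_complete
    apply cauchySeq_of_le_tendsto_0 (fun N : ℕ => (2 * ρ / (1 - ρ) + 1) * (L - r (s + N)))
    · intro n m N hn hm
      have hmono' : ∀ k l : ℕ, N ≤ k → k ≤ l →
          dist (Ψ (s + (k:ℝ)) w) (Ψ (s + (l:ℝ)) w) ≤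
            (2 * ρ / (1 - ρ) + 1) * (L - r (s + N)) := by
        intro k l hNk hkl
        rw [dist_comm]
        calc dist (Ψ (s + (l:ℝ)) w) (Ψ (s + (k:ℝ)) w)
            ≤ (2 * ρ / (1 - ρ) + 1) * (L - r (s + k)) :=
              key ρ hρ0 hρ1 w hw (hρ w rfl) _ _ (le_add_of_nonneg_right k.cast_nonneg)
                (by exact_mod_cast add_le_add_right (Nat.cast_le.2 hkl) s)
          _ ≤ (2 * ρ / (1 - ρ) + 1) * (L - r (s + N)) := by
              apply mul_le_mul_of_nonneg_left _ hC0
              have := hrmono (show s + (N:ℝ) ≤ s + k from by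
                exact_mod_cast add_le_add_right (Nat.cast_le.2 hNk) s)
              linarith
      rcases le_total n m with h | h
      · exact hmono' n m hn h
      · rw [dist_comm]; exact hmono' m n hm h
    · have h0 : Tendsto (fun n : ℕ => L - r (s + n)) atTop (𝓝 (L - L)) :=
        Tendsto.sub tendsto_const_nhds hrseq
      have := h0.const_mul (2 * ρ / (1 - ρ) + 1)
      simpa using this
  choose! θ hθ using hpt
  -- uniform convergence on compacts
  have hUK : ∀ K : Set ℂ, K ⊆ RHP → IsCompact K → TendstoUniformlyOn Ψ θ atTop K := by
    intro K hK hcK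
    rcases K.eq_empty_or_nonempty with rfl | hne
    · exact tendstoUniformlyOn_empty
    obtain ⟨ρ, hρ0, hρ1, hρ⟩ := exists_rho hK hcK hne
    have h1ρ : 0 < 1 - ρ := by linarith
    set C : ℝ := 2 * ρ / (1 - ρ) + 1 with hC
    have hC0 : 0 < C := by positivity
    rw [Metric.tendstoUniformlyOn_iff]
    intro ε hε
    have htail : Tendsto (fun t => L - r t) atTop (𝓝 0) := by
      have h0 : Tendsto (fun t => L - r t) atTop (𝓝 (L - L)) :=
        Tendsto.sub tendsto_const_nhds hrL
      simpa using h0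
    have hev : ∀ᶠ t in atTop, L - r t < ε / (2 * C) :=
      htail.eventually_lt_const (by positivity)
    filter_upwards [hev, eventually_ge_atTop s] with t hlt hts
    intro w hwK
    have hwR : w ∈ RHP := hK hwK
    have hlim : Tendsto (fun n : ℕ => Ψ (s + n) w) atTop (𝓝 (θ w)) := hθ w hwR
    have hdle : ∀ᶠ n : ℕ in atTop, dist (Ψ (s + (n:ℝ)) w) (Ψ t w) ≤ ε / 2 := by
      filter_upwards [eventually_ge_atTop ⌈t - s⌉₊] with n hn
      have htn : t ≤ s + (n:ℝ) := by
        have h1 : t - s ≤ (⌈t - s⌉₊ : ℝ) := Nat.le_ceil _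
        have h2 : ((⌈t - s⌉₊ : ℕ) : ℝ) ≤ n := Nat.cast_le.2 hn
        linarith
      calc dist (Ψ (s + (n:ℝ)) w) (Ψ t w) ≤ C * (L - r t) :=
            key ρ hρ0 hρ1 w hwR (hρ w hwK) t _ hts htn
        _ ≤ C * (ε / (2 * C)) := mul_le_mul_of_nonneg_left hlt.le hC0.le
        _ = ε / 2 := by field_simp
    have hfin : dist (θ w) (Ψ t w) ≤ ε / 2 :=
      le_of_tendsto (hlim.dist tendsto_const_nhds) hdle
    linarith
  have hTLU : TendstoLocallyUniformlyOn Ψ θ atTop RHP :=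
    (tendstoLocallyUniformlyOn_iff_forall_isCompact isOpen_RHP).2 fun K hKsub hKc =>
      hUK K hKsub hKc
  have hdiff : DifferentiableOn ℂ θ RHP := by
    apply hTLU.differentiableOn ?_ isOpen_RHP
    filter_upwards [eventually_ge_atTop s] with t ht
    exact (E.holo hs ht).sub (differentiableOn_const _)
  have hmaps : MapsTo θ RHP RHP := by
    intro w hw
    have hlim := hθ w hw
    have hrelim : Tendsto (fun n : ℕ => (Ψ (s + (n:ℝ)) w).re) atTop (𝓝 (θ w).re) :=
      (Complex.continuous_re.tendsto _).comp hlim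
    have hge : ∀ n : ℕ, w.re ≤ (Ψ (s + (n:ℝ)) w).re := by
      intro n
      have h1 := re_le_phi_re E hs (le_add_of_nonneg_right n.cast_nonneg) hw
      rw [hΨ]
      simp only [Complex.sub_re, Complex.mul_re, Complex.ofReal_re, Complex.ofReal_im,
        Complex.I_re, Complex.I_im, mul_zero, mul_one, zero_mul, sub_zero, zero_sub]
      linarith
    have hle := ge_of_tendsto hrelim (Eventually.of_forall hge)
    exact lt_of_lt_of_le hw.out hle
  exact ⟨θ, hdiff, hmaps, hUK⟩

lemma c_to_b (E : EvolutionFamilyRHP)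
    (hc : ∀ s : ℝ, 0 ≤ s → ∃ θ : ℂ → ℂ,
      DifferentiableOn ℂ θ RHP ∧ Set.MapsTo θ RHP RHP ∧
      ∀ K : Set ℂ, K ⊆ RHP → IsCompact K →
        TendstoUniformlyOn
          (fun t w => E.φ s t w - ((E.φ s t 1).im : ℂ) * Complex.I) θ atTop K) :
    ∀ s : ℝ, 0 ≤ s → ∀ w ∈ RHP, ∃ M : ℝ, ∀ t : ℝ, s ≤ t → (E.φ s t w).re ≤ M := by
  intro s hs w hw
  obtain ⟨θ, _, _, hθu⟩ := hc s hs
  have hU := hθu {w} (singleton_subset_iff.2 hw) isCompact_singleton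
  rw [Metric.tendstoUniformlyOn_iff] at hU
  obtain ⟨T, hT⟩ := (eventually_atTop).1 (hU 1 one_pos)
  refine ⟨(θ w).re + 1, fun t ht => ?_⟩
  set u : ℝ := max t T with hu
  have htu : t ≤ u := le_max_left _ _
  have hTu : T ≤ u := le_max_right _ _
  have h1 : (E.φ s t w).re ≤ (E.φ s u w).re := phi_re_mono E hs ht htu hw
  have h2 := hT u hTu w rfl
  rw [Complex.dist_eq] at h2
  have h4 := Complex.abs_re_le_norm (θ w - (E.φ s u w - ((E.φ s u 1).im : ℂ) * Complex.I))
  have h5 : (θ w - (E.φ s u w - ((E.φ s u 1).im : ℂ) * Complex.I)).re =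
      (θ w).re - (E.φ s u w).re := by
    simp only [Complex.sub_re, Complex.mul_re, Complex.ofReal_re, Complex.ofReal_im,
      Complex.I_re, Complex.I_im, mul_zero, mul_one, zero_mul, sub_zero, zero_sub]
  rw [h5] at h4
  have h6 : |(θ w).re - (E.φ s u w).re| < 1 := lt_of_le_of_lt h4 h2
  have h7 := abs_lt.1 h6
  linarith [h7.1]

/-- For an evolution family in `ℍ` with common Denjoy-Wolff point `∞`, the following are
equivalent: (a) `sup_{t ≥ s₀} Re φ_{s₀,t}(w₀) < ∞` for some `s₀ ≥ 0, w₀ ∈ ℍ`;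
(b) `sup_{t ≥ s} Re φ_{s,t}(w) < ∞` for all `s ≥ 0, w ∈ ℍ`;
(c) for every `s ≥ 0` there is a holomorphic `θ_s : ℍ → ℍ` with
`φ_{s,t} − i·Im φ_{s,t}(1) → θ_s` uniformly on compact subsets of `ℍ`. -/
theorem evolutionFamilyRHP_bounded_tfae (E : EvolutionFamilyRHP) :
    ((∃ s₀ : ℝ, 0 ≤ s₀ ∧ ∃ w₀ ∈ RHP, ∃ M : ℝ,
        ∀ t : ℝ, s₀ ≤ t → (E.φ s₀ t w₀).re ≤ M) ↔
      (∀ s : ℝ, 0 ≤ s → ∀ w ∈ RHP, ∃ M : ℝ,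
        ∀ t : ℝ, s ≤ t → (E.φ s t w).re ≤ M)) ∧
    ((∀ s : ℝ, 0 ≤ s → ∀ w ∈ RHP, ∃ M : ℝ,
        ∀ t : ℝ, s ≤ t → (E.φ s t w).re ≤ M) ↔
      (∀ s : ℝ, 0 ≤ s → ∃ θ : ℂ → ℂ,
        DifferentiableOn ℂ θ RHP ∧ Set.MapsTo θ RHP RHP ∧
        ∀ K : Set ℂ, K ⊆ RHP → IsCompact K →
          TendstoUniformlyOn
            (fun t w => E.φ s t w - ((E.φ s t 1).im : ℂ) * Complex.I) θ atTop K)) := by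
  constructor
  · constructor
    · rintro ⟨s₀, hs₀, w₀, hw₀, M, hM⟩
      exact a_to_b E hs₀ hw₀ hM
    · intro hb
      exact ⟨0, le_refl 0, 1, one_mem_RHP, hb 0 le_rfl 1 one_mem_RHP⟩
  · constructor
    · intro hb s hs
      exact b_to_c E hb hs
    · intro hc
      exact c_to_b E hc
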